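/- arXiv:2006.12772 — 3 statements merged into one kernel-verified Lean document; each statement's English description precedes it below -/
import Mathlib

section
/- Let K ≥ 1 be a real number, δ ∈ (0,1), Δ ∈ (0,1], and set t = (162/Δ²) · ln(162K/(δΔ²)). Then √( ln(4Kt³/δ) / (2t) ) < Δ/6. -/
/-- Let `K ≥ 1`, `δ ∈ (0,1)`, `Δ ∈ (0,1]`, and set
`t = (162/Δ²) · ln(162K/(δΔ²))`. Then `√(ln(4Kt³/δ) / (2t)) < Δ/6`. -/
theorem confidence_radius_small (K δ Δ t : ℝ)
    (hK : 1 ≤ K) (hδ : δ ∈ Set.Ioo (0 : ℝ) 1) (hΔ : Δ ∈ Set.Ioc (0 : ℝ) 1)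
    (ht : t = (162 / Δ ^ 2) * Real.log (162 * K / (δ * Δ ^ 2))) :
    Real.sqrt (Real.log (4 * K * t ^ 3 / δ) / (2 * t)) < Δ / 6 := by
  obtain ⟨hδ0, hδ1⟩ := hδ
  obtain ⟨hΔ0, hΔ1⟩ := hΔ
  have hδΔ : 0 < δ * Δ ^ 2 := by positivity
  set x : ℝ := 162 * K / (δ * Δ ^ 2) with hxdef
  have hx : (162 : ℝ) ≤ x := by
    rw [hxdef, le_div_iff₀ hδΔ]
    nlinarith [sq_nonneg Δ, sq_nonneg (1 - Δ)]
  have hx1 : (1 : ℝ) < x := by linarith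
  set Lg : ℝ := Real.log x with hLdef
  have hL : 0 < Lg := Real.log_pos hx1
  have hLx : Lg < x := by
    have := Real.log_le_sub_one_of_pos (show (0:ℝ) < x by linarith)
    linarith
  have htpos : 0 < t := by
    rw [ht]
    exact mul_pos (by positivity) hL
  -- key polynomial inequality
  have hδ6 : δ ^ 6 ≤ δ := by
    calc δ ^ 6 ≤ δ ^ 1 := pow_le_pow_of_le_one hδ0.le hδ1.le (by norm_num)
    _ = δ := pow_one δ
  have hΔ12 : Δ ^ 12 ≤ Δ ^ 6 := pow_le_pow_of_le_one hΔ0.le hΔ1 (by norm_num)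
  have hK6 : K ≤ K ^ 6 := le_self_pow₀ hK (by norm_num)
  have hx6 : 4 * 162 ^ 3 * K / (δ * Δ ^ 6) < x ^ 6 := by
    rw [hxdef, div_pow, mul_pow, mul_pow, div_lt_div_iff₀ (by positivity) (by positivity)]
    have h1 : 4 * 162 ^ 3 * K * (δ ^ 6 * (Δ ^ 2) ^ 6) ≤ 4 * 162 ^ 3 * K * (δ * Δ ^ 6) := by
      have : δ ^ 6 * (Δ ^ 2) ^ 6 ≤ δ * Δ ^ 6 := by
        calc δ ^ 6 * (Δ ^ 2) ^ 6 = δ ^ 6 * Δ ^ 12 := by ring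
        _ ≤ δ * Δ ^ 6 := mul_le_mul hδ6 hΔ12 (by positivity) hδ0.le
      exact mul_le_mul_of_nonneg_left this (by positivity)
    have h2 : 4 * 162 ^ 3 * K * (δ * Δ ^ 6) < 162 ^ 6 * K ^ 6 * (δ * Δ ^ 6) := by
      have hlt : 4 * 162 ^ 3 * K < 162 ^ 6 * K ^ 6 := by nlinarith
      exact mul_lt_mul_of_pos_right hlt (by positivity)
    linarith
  have hkey : 4 * K * t ^ 3 / δ < x ^ 9 := by
    have h3 : Lg ^ 3 ≤ x ^ 3 := pow_le_pow_left₀ hL.le hLx.le 3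
    have ht3 : 4 * K * t ^ 3 / δ = (4 * 162 ^ 3 * K / (δ * Δ ^ 6)) * Lg ^ 3 := by
      rw [ht]
      field_simp
    rw [ht3]
    calc (4 * 162 ^ 3 * K / (δ * Δ ^ 6)) * Lg ^ 3
        ≤ (4 * 162 ^ 3 * K / (δ * Δ ^ 6)) * x ^ 3 :=
          mul_le_mul_of_nonneg_left h3 (by positivity)
      _ < x ^ 6 * x ^ 3 := mul_lt_mul_of_pos_right hx6 (by positivity)
      _ = x ^ 9 := by ring
  have hlog : Real.log (4 * K * t ^ 3 / δ) < 9 * Lg := by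
    have h := Real.log_lt_log (by positivity) hkey
    rw [Real.log_pow] at h
    push_cast at h
    exact h
  rw [show Δ / 6 = Δ / 6 from rfl]
  rw [Real.sqrt_lt' (by positivity)]
  rw [div_lt_iff₀ (by positivity)]
  have hΔne : Δ ≠ 0 := ne_of_gt hΔ0
  have : (Δ / 6) ^ 2 * (2 * t) = 9 * Lg := by
    rw [ht]
    field_simp
    ring
  rw [this]
  exact hlog
end

section
/- Let w, w̄, r : E → ℝ satisfy |w̄(e) − w(e)| ≤ r(e) for every e ∈ E. Fix a matching Out ∈ 𝓜 and define w̃(e) = w̄(e) − r(e) for e ∈ Out and w̃(e) = w̄(e) + r(e) for e ∉ Out. Then for every matching M ∈ 𝓜, w(M) − w(Out) ≤ w̃(M) − w̃(Out). In particular, if ε ≥ 0 and w̃(M) − w̃(Out) ≤ ℓε for every M ∈ 𝓜, then max_{M ∈ 𝓜} w(M) − w(Out) ≤ ℓε. -/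
open Finset

/-- A matching: one edge for each of the `ℓ` positions, where edge `M j` is at
position `j` (according to the position map `s`). -/
def CPEDB.Matching (ℓ : ℕ) {E : Type*} (s : E → Fin ℓ) : Type _ :=
  { M : Fin ℓ → E // ∀ j, s (M j) = j }

/-- The set of edges of a matching. -/
def CPEDB.Matching.edges {ℓ : ℕ} {E : Type*} [Fintype E] [DecidableEq E]
    {s : E → Fin ℓ} (M : CPEDB.Matching ℓ s) : Finset E :=
  Finset.image M.1 Finset.univ

/-- Let `w, w̄, r : E → ℝ` satisfy `|w̄(e) − w(e)| ≤ r(e)` for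
every edge `e`.  Fix a matching `Out ∈ 𝓜` and define `w̃(e) = w̄(e) − r(e)` for
`e ∈ Out` and `w̃(e) = w̄(e) + r(e)` for `e ∉ Out`.  Then for every matching
`M ∈ 𝓜`, `w(M) − w(Out) ≤ w̃(M) − w̃(Out)`.  In particular, if `ε ≥ 0` and
`w̃(M) − w̃(Out) ≤ ℓε` for every `M ∈ 𝓜`, then `max_{M ∈ 𝓜} w(M) − w(Out) ≤ ℓε`. -/
theorem pac_stopping_guarantee
    (ℓ : ℕ) (hℓ : 1 ≤ ℓ) (E : Type*) [Fintype E] [DecidableEq E]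
    (s : E → Fin ℓ)
    (𝓜 : Finset (CPEDB.Matching ℓ s)) (h𝓜 : 𝓜.Nonempty)
    (w wbar r : E → ℝ) (hwr : ∀ e, |wbar e - w e| ≤ r e)
    (Out : CPEDB.Matching ℓ s) (hOut : Out ∈ 𝓜)
    (wt : E → ℝ)
    (hwt : ∀ e, wt e = if e ∈ Out.edges then wbar e - r e else wbar e + r e) :
    (∀ M ∈ 𝓜, (∑ e ∈ M.edges, w e) - (∑ e ∈ Out.edges, w e)
        ≤ (∑ e ∈ M.edges, wt e) - (∑ e ∈ Out.edges, wt e)) ∧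
    (∀ ε : ℝ, 0 ≤ ε →
      (∀ M ∈ 𝓜, (∑ e ∈ M.edges, wt e) - (∑ e ∈ Out.edges, wt e) ≤ (ℓ : ℝ) * ε) →
      𝓜.sup' h𝓜 (fun M => ∑ e ∈ M.edges, w e) - (∑ e ∈ Out.edges, w e) ≤ (ℓ : ℝ) * ε) := by
  have key : ∀ M ∈ 𝓜, (∑ e ∈ M.edges, w e) - (∑ e ∈ Out.edges, w e)
      ≤ (∑ e ∈ M.edges, wt e) - (∑ e ∈ Out.edges, wt e) := by
    intro M hM
    have h1 : ∀ e ∈ Out.edges, 0 ≤ w e - wt e := by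
      intro e he
      rw [hwt e, if_pos he]
      have := abs_le.mp (hwr e)
      linarith [this.1]
    have h2 : ∀ e, e ∉ Out.edges → w e - wt e ≤ 0 := by
      intro e he
      rw [hwt e, if_neg he]
      have := abs_le.mp (hwr e)
      linarith [this.2]
    have hmain : ∑ e ∈ M.edges, (w e - wt e) ≤ ∑ e ∈ Out.edges, (w e - wt e) := by
      calc ∑ e ∈ M.edges, (w e - wt e)
          = (∑ e ∈ M.edges ∩ Out.edges, (w e - wt e))
            + ∑ e ∈ M.edges \ Out.edges, (w e - wt e) :=
            (Finset.sum_inter_add_sum_sdiff _ _ _).symm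
        _ ≤ ∑ e ∈ M.edges ∩ Out.edges, (w e - wt e) := by
            have : ∑ e ∈ M.edges \ Out.edges, (w e - wt e) ≤ 0 :=
              Finset.sum_nonpos fun e he => h2 e (Finset.mem_sdiff.mp he).2
            linarith
        _ ≤ ∑ e ∈ Out.edges, (w e - wt e) :=
            Finset.sum_le_sum_of_subset_of_nonneg (Finset.inter_subset_right)
              (fun e he _ => h1 e he)
    rw [Finset.sum_sub_distrib, Finset.sum_sub_distrib] at hmain
    linarith
  refine ⟨key, fun ε hε hb => ?_⟩
  rw [sub_le_iff_le_add]
  apply Finset.sup'_le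
  intro M hM
  have := le_trans (key M hM) (hb M hM)
  linarith
end

section
/- Let w, w̄, r : E → ℝ satisfy |w̄(e) − w(e)| < r(e) for every e ∈ E. Fix a matching M_t ∈ 𝓜 and define w̃(e) = w̄(e) − r(e) for e ∈ M_t and w̃(e) = w̄(e) + r(e) for e ∉ M_t. If w̃(M_t) ≥ w̃(M) for every M ∈ 𝓜, then w(M_t) > w(M) for every M ∈ 𝓜 with M ≠ M_t; that is, M_t is the unique maximizer of w over 𝓜. -/
open Finset

lemma matching_inj {ℓ : ℕ} {E : Type*} {s : E → Fin ℓ}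
    (M : CPEDB.Matching ℓ s) : Function.Injective M.1 := by
  intro i j h
  have := M.2 i
  rw [h, M.2 j] at this
  exact this.symm

lemma edges_card {ℓ : ℕ} {E : Type*} [Fintype E] [DecidableEq E]
    {s : E → Fin ℓ} (M : CPEDB.Matching ℓ s) : M.edges.card = ℓ := by
  rw [CPEDB.Matching.edges, Finset.card_image_of_injective _ (matching_inj M)]
  simp

lemma edges_injective {ℓ : ℕ} {E : Type*} [Fintype E] [DecidableEq E]
    {s : E → Fin ℓ} (M N : CPEDB.Matching ℓ s) (h : M.edges = N.edges) :
    M = N := by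
  apply Subtype.ext
  funext j
  have hj : M.1 j ∈ N.edges := by
    rw [← h, CPEDB.Matching.edges]
    exact Finset.mem_image_of_mem _ (Finset.mem_univ j)
  rw [CPEDB.Matching.edges, Finset.mem_image] at hj
  obtain ⟨i, -, hi⟩ := hj
  have : s (N.1 i) = s (M.1 j) := by rw [hi]
  rw [N.2 i, M.2 j] at this
  rw [← hi, this]

/-- Let `w, w̄, r : E → ℝ` satisfy `|w̄(e) − w(e)| < r(e)` for
every edge `e`.  Fix a matching `M_t ∈ 𝓜` and define `w̃(e) = w̄(e) − r(e)` for
`e ∈ M_t` and `w̃(e) = w̄(e) + r(e)` for `e ∉ M_t`.  If `w̃(M_t) ≥ w̃(M)` for every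
`M ∈ 𝓜`, then `w(M_t) > w(M)` for every `M ∈ 𝓜` with `M ≠ M_t`; that is, `M_t` is
the unique maximizer of `w` over `𝓜`. -/
theorem exact_stopping_guarantee
    (ℓ : ℕ) (hℓ : 1 ≤ ℓ) (E : Type*) [Fintype E] [DecidableEq E]
    (s : E → Fin ℓ)
    (𝓜 : Finset (CPEDB.Matching ℓ s)) (h𝓜 : 𝓜.Nonempty)
    (w wbar r : E → ℝ) (hwr : ∀ e, |wbar e - w e| < r e)
    (Mt : CPEDB.Matching ℓ s) (hMt : Mt ∈ 𝓜)
    (wt : E → ℝ)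
    (hwt : ∀ e, wt e = if e ∈ Mt.edges then wbar e - r e else wbar e + r e)
    (hmax : ∀ M ∈ 𝓜, ∑ e ∈ M.edges, wt e ≤ ∑ e ∈ Mt.edges, wt e) :
    ∀ M ∈ 𝓜, M ≠ Mt → ∑ e ∈ M.edges, w e < ∑ e ∈ Mt.edges, w e := by
  intro M hM hne
  have hedges : M.edges ≠ Mt.edges := fun h => hne (edges_injective M Mt h)
  -- A = Mt \ M, B = M \ Mt
  set A := Mt.edges \ M.edges with hA
  set B := M.edges \ Mt.edges with hB
  have hAne : A.Nonempty := by
    rw [Finset.sdiff_nonempty]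
    intro hsub
    exact hedges (Finset.eq_of_subset_of_card_le hsub
      (by rw [edges_card, edges_card])).symm
  -- strict inequalities
  have hAw : ∀ e ∈ A, wt e < w e := by
    intro e he
    have heM : e ∈ Mt.edges := (Finset.mem_sdiff.mp he).1
    rw [hwt e, if_pos heM]
    have := (abs_lt.mp (hwr e)).2
    linarith
  have hBw : ∀ e ∈ B, w e < wt e := by
    intro e he
    have heM : e ∉ Mt.edges := (Finset.mem_sdiff.mp he).2
    rw [hwt e, if_neg heM]
    have := (abs_lt.mp (hwr e)).1
    linarith
  have h1 : ∑ e ∈ A, wt e < ∑ e ∈ A, w e :=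
    Finset.sum_lt_sum_of_nonempty hAne hAw
  have h2 : ∑ e ∈ B, w e ≤ ∑ e ∈ B, wt e :=
    Finset.sum_le_sum (fun e he => le_of_lt (hBw e he))
  -- decompositions
  have dMt : ∀ f : E → ℝ, ∑ e ∈ Mt.edges, f e
      = ∑ e ∈ Mt.edges ∩ M.edges, f e + ∑ e ∈ A, f e := by
    intro f
    rw [hA, Finset.sum_inter_add_sum_sdiff]
  have dM : ∀ f : E → ℝ, ∑ e ∈ M.edges, f e
      = ∑ e ∈ Mt.edges ∩ M.edges, f e + ∑ e ∈ B, f e := by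
    intro f
    rw [hB, Finset.inter_comm, Finset.sum_inter_add_sum_sdiff]
  have h3 : ∑ e ∈ B, wt e ≤ ∑ e ∈ A, wt e := by
    have := hmax M hM
    rw [dMt wt, dM wt] at this
    linarith
  rw [dMt w, dM w]
  linarith
end
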